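/- arXiv:1411.2232 — 2 statements merged into one kernel-verified Lean document; each statement's English description precedes it below -/
import Mathlib

section
/- Let β ∈ ℝ, and let (x_n)_{n≥1}, (y_n)_{n≥1} be sequences of real numbers with x_n → x ∈ ℝ and y_n → y ∈ ℝ. Then for all sufficiently large n one has 1 + x_n/n^{3/2} > 0 and ∫_0^1 (1 + x_n/n^{3/2})^s ds > 0, and n^{1/2} · ( (n^{-1/2}·y_n + β) / ∫_0^1 (1 + x_n/n^{3/2})^s ds − β ) → y as n → ∞. -/
open Filter

private lemma rpow_sub_one_abs_le {u : ℝ} (hu : 0 < u) {s : ℝ}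
    (hs0 : 0 ≤ s) (hs1 : s ≤ 1) : |u ^ s - 1| ≤ |u - 1| := by
  rcases le_or_gt 1 u with h | h
  · have h1 : (1:ℝ) ≤ u ^ s := by
      have := Real.rpow_le_rpow_of_exponent_le h hs0
      simpa using Real.one_le_rpow h hs0
    have h2 : u ^ s ≤ u := by
      have := Real.rpow_le_rpow_of_exponent_le h hs1
      simpa using this
    rw [abs_of_nonneg (by linarith), abs_of_nonneg (by linarith)]
    linarith
  · have h1 : u ^ s ≤ 1 := by
      have := Real.rpow_le_one hu.le h.le hs0
      simpa using this
    have h2 : u ≤ u ^ s := by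
      have := Real.rpow_le_rpow_of_exponent_ge hu h.le hs1
      simpa using this
    rw [abs_of_nonpos (by linarith), abs_of_nonpos (by linarith)]
    linarith

private lemma integral_rpow_sub_one_abs_le {u : ℝ} (hu : 0 < u) :
    |(∫ s in (0:ℝ)..1, u ^ s) - 1| ≤ |u - 1| := by
  have hcont : Continuous fun s : ℝ => u ^ s := by
    have h : (fun s : ℝ => u ^ s) = fun s => Real.exp (Real.log u * s) := by
      ext s; rw [Real.rpow_def_of_pos hu]
    rw [h]
    exact Real.continuous_exp.comp (continuous_const.mul continuous_id)
  have hint : IntervalIntegrable (fun s : ℝ => u ^ s) MeasureTheory.volume 0 1 :=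
    hcont.intervalIntegrable 0 1
  have heq : (∫ s in (0:ℝ)..1, u ^ s) - 1
      = ∫ s in (0:ℝ)..1, (u ^ s - 1) := by
    rw [intervalIntegral.integral_sub hint (intervalIntegrable_const)]
    simp
  rw [heq]
  have := intervalIntegral.norm_integral_le_of_norm_le_const
    (a := (0:ℝ)) (b := 1) (C := |u - 1|) (f := fun s => u ^ s - 1) ?_
  · simpa using this
  · intro s hs
    rw [Set.uIoc_of_le (by norm_num : (0:ℝ) ≤ 1)] at hs
    exact rpow_sub_one_abs_le hu hs.1.le hs.2

theorem reparametrized_estimator_limit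
    (β : ℝ) (x y : ℕ → ℝ) (xlim ylim : ℝ)
    (hx : Filter.Tendsto x Filter.atTop (nhds xlim))
    (hy : Filter.Tendsto y Filter.atTop (nhds ylim)) :
    (∀ᶠ n : ℕ in Filter.atTop, 0 < 1 + x n / (n : ℝ) ^ ((3 : ℝ) / 2)) ∧
    (∀ᶠ n : ℕ in Filter.atTop,
      0 < ∫ s in (0 : ℝ)..1, (1 + x n / (n : ℝ) ^ ((3 : ℝ) / 2)) ^ s) ∧
    Filter.Tendsto
      (fun n : ℕ => (n : ℝ) ^ ((1 : ℝ) / 2) *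
        (((n : ℝ) ^ (-(1 : ℝ) / 2) * y n + β) /
            (∫ s in (0 : ℝ)..1, (1 + x n / (n : ℝ) ^ ((3 : ℝ) / 2)) ^ s) - β))
      Filter.atTop (nhds ylim) := by
  set u : ℕ → ℝ := fun n => 1 + x n / (n : ℝ) ^ ((3 : ℝ) / 2) with hu_def
  set I : ℕ → ℝ := fun n => ∫ s in (0:ℝ)..1, (u n) ^ s with hI_def
  have h32 : Tendsto (fun n : ℕ => ((n:ℝ)) ^ ((3:ℝ)/2)) atTop atTop :=
    (tendsto_rpow_atTop (by norm_num)).comp tendsto_natCast_atTop_atTop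
  have hx0 : Tendsto (fun n : ℕ => x n / (n:ℝ) ^ ((3:ℝ)/2)) atTop (nhds 0) :=
    hx.div_atTop h32
  have hu1 : Tendsto u atTop (nhds 1) := by
    have h := Tendsto.add (tendsto_const_nhds : Tendsto (fun _ : ℕ => (1:ℝ)) atTop (nhds 1)) hx0
    simpa using h
  have habs : Tendsto (fun n => |u n - 1|) atTop (nhds 0) := by
    have : Tendsto (fun n => u n - 1) atTop (nhds 0) := by
      simpa using hu1.sub_const 1
    simpa using this.abs
  have hpos : ∀ᶠ n in atTop, 0 < u n :=
    hu1.eventually (eventually_gt_nhds one_pos)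
  have hsmall : ∀ᶠ n in atTop, |u n - 1| < 1/2 :=
    habs.eventually (eventually_lt_nhds (by norm_num))
  have hIbound : ∀ᶠ n in atTop, |I n - 1| ≤ |u n - 1| := by
    filter_upwards [hpos] with n hn
    exact integral_rpow_sub_one_abs_le hn
  have hIpos : ∀ᶠ n in atTop, 0 < I n := by
    filter_upwards [hIbound, hsmall] with n h1 h2
    have := abs_lt.mp (lt_of_le_of_lt h1 h2)
    linarith [this.1]
  refine ⟨hpos, hIpos, ?_⟩
  -- I → 1
  have hIlim : Tendsto I atTop (nhds 1) := by
    have h0 : Tendsto (fun n => I n - 1) atTop (nhds 0) :=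
      squeeze_zero_norm' (by simpa using hIbound) habs
    have := h0.add_const 1
    simpa using this
  -- J := n^{1/2} (1 - I n) → 0
  have hJ : Tendsto (fun n : ℕ => (n:ℝ) ^ ((1:ℝ)/2) * (1 - I n)) atTop (nhds 0) := by
    have hG : Tendsto (fun n : ℕ => |x n| / (n:ℝ)) atTop (nhds 0) := by
      have := (hx.abs).div_atTop tendsto_natCast_atTop_atTop
      simpa using this
    refine squeeze_zero_norm' ?_ hG
    filter_upwards [hIbound, eventually_ge_atTop 1] with n h1 hn1
    have hn : (0:ℝ) < (n:ℝ) := by exact_mod_cast hn1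
    have hbound : |u n - 1| = |x n| / (n:ℝ) ^ ((3:ℝ)/2) := by
      simp only [hu_def]
      rw [add_sub_cancel_left, abs_div,
        abs_of_nonneg (Real.rpow_nonneg hn.le _)]
    have hkey : (n:ℝ) ^ ((1:ℝ)/2) * (|x n| / (n:ℝ) ^ ((3:ℝ)/2))
        = |x n| / (n:ℝ) := by
      rw [show (3:ℝ)/2 = 1/2 + 1 by norm_num, Real.rpow_add hn, Real.rpow_one]
      have h1 : (n:ℝ) ^ ((1:ℝ)/2) ≠ 0 := (Real.rpow_pos_of_pos hn _).ne'
      field_simp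
    calc ‖(n:ℝ) ^ ((1:ℝ)/2) * (1 - I n)‖
        = (n:ℝ) ^ ((1:ℝ)/2) * |I n - 1| := by
          rw [norm_mul, Real.norm_eq_abs, Real.norm_eq_abs,
            abs_of_nonneg (Real.rpow_nonneg hn.le _), abs_sub_comm]
      _ ≤ (n:ℝ) ^ ((1:ℝ)/2) * |u n - 1| := by
          exact mul_le_mul_of_nonneg_left h1 (Real.rpow_nonneg hn.le _)
      _ = |x n| / (n:ℝ) := by rw [hbound, hkey]
  -- numerator
  have hnum : Tendsto (fun n : ℕ => y n + β * ((n:ℝ) ^ ((1:ℝ)/2) * (1 - I n)))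
      atTop (nhds ylim) := by
    have := hy.add ((tendsto_const_nhds (x := β)).mul hJ)
    simpa using this
  have hdiv : Tendsto (fun n : ℕ => (y n + β * ((n:ℝ) ^ ((1:ℝ)/2) * (1 - I n))) / I n)
      atTop (nhds ylim) := by
    have := hnum.div hIlim one_ne_zero
    rw [div_one] at this
    exact this
  refine hdiv.congr' ?_
  filter_upwards [hIpos, eventually_ge_atTop 1] with n hI hn1
  have hn : (0:ℝ) < (n:ℝ) := by exact_mod_cast hn1
  have hIne : I n ≠ 0 := hI.ne'
  have hhalf : (0:ℝ) < (n:ℝ) ^ ((1:ℝ)/2) := Real.rpow_pos_of_pos hn _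
  have hneg : (n:ℝ) ^ (-(1:ℝ)/2) = ((n:ℝ) ^ ((1:ℝ)/2))⁻¹ := by
    rw [show -(1:ℝ)/2 = -(1/2) by norm_num, Real.rpow_neg hn.le]
  show (y n + β * ((n:ℝ) ^ ((1:ℝ)/2) * (1 - I n))) / I n
      = (n:ℝ) ^ ((1:ℝ)/2) * (((n:ℝ) ^ (-(1:ℝ)/2) * y n + β) / I n - β)
  rw [hneg]
  field_simp
  ring
end

section
/- Let (Ω, 𝓕, P) be a probability space with a filtration (𝓕_k)_{k∈ℕ}, and let (M_k)_{k≥1} be a square-integrable martingale difference sequence with respect to (𝓕_k): each M_k is 𝓕_k-measurable and integrable, and E[M_k ∣ 𝓕_{k−1}] = 0 almost surely. Suppose there is a constant V₀ such that E(M_k²) ≤ V₀ for all k ≥ 1. Let β̃ ≥ 0 and define X_0 := 0 and X_k := β̃·k + ∑_{j=1}^{k} M_j for k ≥ 1. Then for every T > 0, sup_{t ∈ [0,T]} | n^{-3} · ∑_{k=1}^{⌊nt⌋} X_{k−1}² − β̃²·t³/3 | → 0 in probability as n → ∞. -/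
open MeasureTheory Filter Finset Topology

lemma aux_sum_sq (m : ℕ) : |∑ k ∈ range m, (k:ℝ)^2 - (m:ℝ)^3/3| ≤ (m:ℝ)^2 := by
  induction m with
  | zero => simp
  | succ m ih =>
    rw [Finset.sum_range_succ]
    push_cast
    rw [abs_le] at ih ⊢
    constructor <;> nlinarith [ih.1, ih.2, Nat.cast_nonneg (α := ℝ) m]

lemma aux_amgm (a b c : ℝ) (hc : 0 < c) : 2*a*b ≤ a^2/c + c*b^2 := by
  rw [div_add' _ _ _ hc.ne', le_div_iff₀ hc]
  nlinarith [sq_nonneg (a - c*b)]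

lemma aux_int_mul {Ω : Type*} {mΩ : MeasurableSpace Ω} {μ : Measure Ω} {f g : Ω → ℝ}
    (hf : MemLp f 2 μ) (hg : MemLp g 2 μ) : Integrable (fun ω => f ω * g ω) μ := by
  refine Integrable.mono' ((hf.integrable_sq.add hg.integrable_sq).const_mul (1/2))
    (hf.aestronglyMeasurable.mul hg.aestronglyMeasurable) ?_
  filter_upwards with ω
  rw [Real.norm_eq_abs, abs_mul]
  simp only [Pi.add_apply]
  nlinarith [sq_nonneg (|f ω| - |g ω|), abs_nonneg (f ω), abs_nonneg (g ω),
    sq_abs (f ω), sq_abs (g ω)]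

lemma aux_sqrt_tendsto : Tendsto (fun x : ℝ => Real.sqrt x) atTop atTop := by
  have := tendsto_rpow_atTop (by norm_num : (0:ℝ) < 1/2)
  exact this.congr fun x => (Real.sqrt_eq_rpow _).symm

lemma aux_orth {Ω : Type*} {mΩ : MeasurableSpace Ω} (μ : Measure Ω)
    [IsProbabilityMeasure μ] (𝓕 : Filtration ℕ mΩ) (M : ℕ → Ω → ℝ)
    (hmeas : ∀ k, 1 ≤ k → StronglyMeasurable[𝓕 k] (M k))
    (hL2 : ∀ k, 1 ≤ k → MemLp (M k) 2 μ)
    (hmd : ∀ k, 1 ≤ k → μ[M k | 𝓕 (k - 1)] =ᵐ[μ] 0)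
    {i j : ℕ} (hi : 1 ≤ i) (hij : i < j) :
    ∫ ω, M i ω * M j ω ∂μ = 0 := by
  have hj : 1 ≤ j := hi.trans hij.le
  have hm : 𝓕 (j-1) ≤ mΩ := 𝓕.le _
  have hprod : Integrable (M i * M j) μ := aux_int_mul (hL2 i hi) (hL2 j hj)
  have hmi : StronglyMeasurable[𝓕 (j-1)] (M i) :=
    (hmeas i hi).mono (𝓕.mono (by omega))
  have h1 : μ[M i * M j | 𝓕 (j-1)] =ᵐ[μ] M i * μ[M j | 𝓕 (j-1)] :=
    condExp_mul_of_stronglyMeasurable_left hmi hprod ((hL2 j hj).integrable one_le_two)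
  have h2 : μ[M i * M j | 𝓕 (j-1)] =ᵐ[μ] 0 := by
    refine h1.trans ?_
    filter_upwards [hmd j hj] with ω hω
    simp [hω]
  calc ∫ ω, M i ω * M j ω ∂μ = ∫ ω, (μ[M i * M j | 𝓕 (j-1)]) ω ∂μ :=
        (integral_condExp hm (f := M i * M j)).symm
    _ = 0 := by rw [integral_congr_ae h2]; simp

lemma aux_S2 {Ω : Type*} {mΩ : MeasurableSpace Ω} (μ : Measure Ω)
    [IsProbabilityMeasure μ] (𝓕 : Filtration ℕ mΩ) (M : ℕ → Ω → ℝ)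
    (hmeas : ∀ k, 1 ≤ k → StronglyMeasurable[𝓕 k] (M k))
    (hL2 : ∀ k, 1 ≤ k → MemLp (M k) 2 μ)
    (hmd : ∀ k, 1 ≤ k → μ[M k | 𝓕 (k - 1)] =ᵐ[μ] 0)
    {V₀ : ℝ} (hV : ∀ k, 1 ≤ k → ∫ ω, (M k ω) ^ 2 ∂μ ≤ V₀) (k : ℕ) :
    ∫ ω, (∑ j ∈ Icc 1 k, M j ω)^2 ∂μ ≤ k * V₀ := by
  have hmem : ∀ i ∈ Icc 1 k, 1 ≤ i := fun i hi => (Finset.mem_Icc.1 hi).1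
  have hint : ∀ i ∈ Icc 1 k, ∀ j ∈ Icc 1 k, Integrable (fun ω => M i ω * M j ω) μ :=
    fun i hi j hj => aux_int_mul (hL2 i (hmem i hi)) (hL2 j (hmem j hj))
  have h1 : ∫ ω, (∑ j ∈ Icc 1 k, M j ω)^2 ∂μ
      = ∑ i ∈ Icc 1 k, ∑ j ∈ Icc 1 k, ∫ ω, M i ω * M j ω ∂μ := by
    have : ∀ ω, (∑ j ∈ Icc 1 k, M j ω)^2
        = ∑ i ∈ Icc 1 k, ∑ j ∈ Icc 1 k, M i ω * M j ω := by
      intro ω; rw [sq, Finset.sum_mul_sum]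
    rw [integral_congr_ae (Eventually.of_forall this),
      integral_finset_sum _ (fun i hi => integrable_finset_sum _ (hint i hi))]
    exact Finset.sum_congr rfl fun i hi => integral_finset_sum _ (hint i hi)
  have h2 : ∀ i ∈ Icc 1 k, ∑ j ∈ Icc 1 k, ∫ ω, M i ω * M j ω ∂μ ≤ V₀ := by
    intro i hi
    rw [Finset.sum_eq_single_of_mem i hi]
    · calc ∫ ω, M i ω * M i ω ∂μ = ∫ ω, (M i ω)^2 ∂μ := by
            exact integral_congr_ae (Eventually.of_forall fun ω => by simp [sq])
        _ ≤ V₀ := hV i (hmem i hi)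
    · intro j hj hne
      rcases lt_or_gt_of_ne hne with h | h
      · rw [show (fun ω => M i ω * M j ω) = fun ω => M j ω * M i ω from funext fun ω => mul_comm _ _]
        exact aux_orth μ 𝓕 M hmeas hL2 hmd (hmem j hj) h
      · exact aux_orth μ 𝓕 M hmeas hL2 hmd (hmem i hi) h
  rw [h1]
  calc ∑ i ∈ Icc 1 k, ∑ j ∈ Icc 1 k, ∫ ω, M i ω * M j ω ∂μ
      ≤ ∑ _i ∈ Icc 1 k, V₀ := Finset.sum_le_sum h2
    _ = k * V₀ := by rw [Finset.sum_const, Nat.card_Icc]; simp [mul_comm]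

lemma aux_tim {Ω : Type*} {mΩ : MeasurableSpace Ω} (μ : Measure Ω)
    [IsProbabilityMeasure μ] (Y W : ℝ → Ω → ℝ)
    (hWint : ∀ n, Integrable (W n) μ)
    (hbound : ∀ᶠ n in atTop, ∀ ω, |Y n ω| ≤ W n ω)
    (hE : Tendsto (fun n => ∫ ω, W n ω ∂μ) atTop (𝓝 0)) :
    TendstoInMeasure μ Y atTop (fun _ => (0 : ℝ)) := by
  refine tendstoInMeasure_iff_dist.2 ?_
  intro ε hε
  refine tendsto_of_tendsto_of_tendsto_of_le_of_le' tendsto_const_nhds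
    (h := fun n => ENNReal.ofReal (ε⁻¹ * ∫ ω, W n ω ∂μ)) ?_ ?_ ?_
  · have : Tendsto (fun n => ε⁻¹ * ∫ ω, W n ω ∂μ) atTop (𝓝 0) := by
      simpa using hE.const_mul ε⁻¹
    simpa using ENNReal.tendsto_ofReal this
  · exact Eventually.of_forall fun n => zero_le
  · filter_upwards [hbound] with n hn
    have hWn : ∀ ω, 0 ≤ W n ω := fun ω => (abs_nonneg _).trans (hn ω)
    have hsub : {ω | ε ≤ dist (Y n ω) 0} ⊆ {ω | ε ≤ W n ω} := by
      intro ω hω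
      exact le_trans (by simpa [Real.dist_eq] using hω) (hn ω)
    refine (measure_mono hsub).trans ?_
    have hfin : μ {ω | ε ≤ W n ω} ≠ ⊤ := measure_ne_top _ _
    have hmar : ε * (μ {ω | ε ≤ W n ω}).toReal ≤ ∫ ω, W n ω ∂μ :=
      mul_meas_ge_le_integral_of_nonneg (Eventually.of_forall hWn) (hWint n) ε
    have : (μ {ω | ε ≤ W n ω}).toReal ≤ ε⁻¹ * ∫ ω, W n ω ∂μ := by
      rw [mul_comm, ← le_div_iff₀ hε] at hmar
      simpa [div_eq_mul_inv, mul_comm] using hmar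
    calc μ {ω | ε ≤ W n ω} = ENNReal.ofReal (μ {ω | ε ≤ W n ω}).toReal :=
          (ENNReal.ofReal_toReal hfin).symm
      _ ≤ ENNReal.ofReal (ε⁻¹ * ∫ ω, W n ω ∂μ) := ENNReal.ofReal_le_ofReal this

set_option maxHeartbeats 1000000 in
theorem lln_second_moment_pure_immigration
    {Ω : Type*} {mΩ : MeasurableSpace Ω} (μ : Measure Ω)
    [IsProbabilityMeasure μ] (𝓕 : Filtration ℕ mΩ) (M : ℕ → Ω → ℝ)
    (hmeas : ∀ k, 1 ≤ k → StronglyMeasurable[𝓕 k] (M k))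
    (hint : ∀ k, 1 ≤ k → Integrable (M k) μ)
    (hL2 : ∀ k, 1 ≤ k → MemLp (M k) 2 μ)
    (hmd : ∀ k, 1 ≤ k → μ[M k | 𝓕 (k - 1)] =ᵐ[μ] 0)
    (V₀ : ℝ) (hV : ∀ k, 1 ≤ k → ∫ ω, (M k ω) ^ 2 ∂μ ≤ V₀)
    (β : ℝ) (hβ : 0 ≤ β) (X : ℕ → Ω → ℝ)
    (hX : ∀ k ω, X k ω = β * k + ∑ j ∈ Finset.Icc 1 k, M j ω)
    (T : ℝ) (hT : 0 < T) :
    TendstoInMeasure μ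
      (fun n ω => ⨆ t : Set.Icc (0 : ℝ) T,
        |(∑ k ∈ Finset.range ⌊(n : ℝ) * (t : ℝ)⌋₊, (X k ω) ^ 2) / (n : ℝ) ^ 3 -
          β ^ 2 * (t : ℝ) ^ 3 / 3|)
      Filter.atTop (fun _ => (0 : ℝ)) := by
  classical
  set S : ℕ → Ω → ℝ := fun k ω => ∑ j ∈ Icc 1 k, M j ω with hSdef
  have hSL2 : ∀ k, MemLp (S k) 2 μ := by
    intro k
    simp only [hSdef]
    exact memLp_finset_sum _ (fun j hj => hL2 j (Finset.mem_Icc.1 hj).1)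
  have hSsqInt : ∀ k, Integrable (fun ω => (S k ω)^2) μ := fun k => (hSL2 k).integrable_sq
  have hS2 : ∀ k : ℕ, ∫ ω, (S k ω)^2 ∂μ ≤ k * V₀ := fun k =>
    aux_S2 μ 𝓕 M hmeas hL2 hmd hV k
  have hV0 : 0 ≤ V₀ := le_trans (integral_nonneg fun ω => sq_nonneg _) (hV 1 le_rfl)
  set m : ℝ → ℕ := fun n => ⌊n*T⌋₊ with hmdef
  set c : ℝ → ℝ := fun n => β * Real.sqrt n + 1 with hcdef
  have hc0 : ∀ n, 0 ≤ c n := fun n => by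
    have := Real.sqrt_nonneg n; simp only [hcdef]; positivity
  set W : ℝ → Ω → ℝ := fun n ω => 2*β^2*T^2/n +
      (∑ k ∈ range (m n), (β*(k:ℝ)^2/Real.sqrt n + c n * (S k ω)^2))/n^3 with hWdef
  have hterm_int : ∀ n : ℝ, ∀ k ∈ range (m n),
      Integrable (fun ω => β*(k:ℝ)^2/Real.sqrt n + c n * (S k ω)^2) μ :=
    fun n k _ => (integrable_const _).add ((hSsqInt k).const_mul _)
  have hWint : ∀ n, Integrable (W n) μ := by
    intro n
    exact (integrable_const _).add ((integrable_finset_sum _ (hterm_int n)).div_const _)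
  refine aux_tim μ (fun n ω => ⨆ t : Set.Icc (0 : ℝ) T,
      |(∑ k ∈ Finset.range ⌊(n : ℝ) * (t : ℝ)⌋₊, (X k ω) ^ 2) / (n : ℝ) ^ 3 -
        β ^ 2 * (t : ℝ) ^ 3 / 3|) W hWint ?_ ?_
  · -- pointwise bound
    filter_upwards [eventually_ge_atTop (1:ℝ)] with n hn ω
    have hn0 : (0:ℝ) < n := lt_of_lt_of_le zero_lt_one hn
    have hsn : 0 < Real.sqrt n := Real.sqrt_pos.2 hn0
    haveI : Nonempty (Set.Icc (0:ℝ) T) := Set.nonempty_Icc_subtype hT.le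
    rw [abs_of_nonneg (Real.iSup_nonneg fun t => abs_nonneg _)]
    refine ciSup_le fun t => ?_
    obtain ⟨ht0, htT⟩ := t.2
    set t' : ℝ := (t : ℝ) with ht'
    set m' : ℕ := ⌊n*t'⌋₊ with hm'
    have hr0 : (0:ℝ) ≤ n*t' := mul_nonneg hn0.le ht0
    have htn : n*t' ≤ n*T := mul_le_mul_of_nonneg_left htT hn0.le
    have hm'le : m' ≤ m n := Nat.floor_le_floor htn
    have hXsum : (∑ k ∈ range m', (X k ω)^2)
        = β^2 * (∑ k ∈ range m', (k:ℝ)^2) + ∑ k ∈ range m', (2*β*k*S k ω + (S k ω)^2) := by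
      rw [Finset.mul_sum, ← Finset.sum_add_distrib]
      refine Finset.sum_congr rfl fun k _ => ?_
      rw [hX k ω]
      simp only [hSdef]
      ring
    have hsplit : (∑ k ∈ range m', (X k ω)^2)/n^3 - β^2*t'^3/3
        = β^2 * ((∑ k ∈ range m', (k:ℝ)^2)/n^3 - t'^3/3)
          + (∑ k ∈ range m', (2*β*k*S k ω + (S k ω)^2))/n^3 := by
      rw [hXsum]; ring
    rw [hsplit]
    have hdet : |(∑ k ∈ range m', (k:ℝ)^2)/n^3 - t'^3/3| ≤ 2*T^2/n := by
      have h1 : (m' : ℝ) ≤ n*t' := Nat.floor_le hr0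
      have h2 : n*t' < (m' : ℝ) + 1 := Nat.lt_floor_add_one _
      have h3 := aux_sum_sq m'
      have heq : (∑ k ∈ range m', (k:ℝ)^2)/n^3 - t'^3/3
          = ((∑ k ∈ range m', (k:ℝ)^2) - (n*t')^3/3)/n^3 := by
        field_simp
      rw [heq, abs_div, abs_of_pos (by positivity : (0:ℝ) < n^3),
        div_le_iff₀ (by positivity : (0:ℝ) < n^3)]
      have h4 : |(∑ k ∈ range m', (k:ℝ)^2) - (n*t')^3/3|
          ≤ |(∑ k ∈ range m', (k:ℝ)^2) - (m':ℝ)^3/3| + |(m':ℝ)^3/3 - (n*t')^3/3| :=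
        abs_sub_le _ _ _
      have hm'0 : (0:ℝ) ≤ (m':ℝ) := Nat.cast_nonneg m'
      have hcube : (m':ℝ)^3 ≤ (n*t')^3 := pow_le_pow_left₀ hm'0 h1 3
      have h5 : |(m':ℝ)^3/3 - (n*t')^3/3| ≤ (n*t')^2 := by
        rw [abs_of_nonpos (by linarith)]
        nlinarith [h1, h2, hr0, hm'0, mul_nonneg hr0 hm'0]
      have h6 : (n*t')^2 ≤ (n*T)^2 := by nlinarith
      have h7 : (m':ℝ)^2 ≤ (n*T)^2 := by nlinarith
      calc |(∑ k ∈ range m', (k:ℝ)^2) - (n*t')^3/3|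
          ≤ (m':ℝ)^2 + (n*t')^2 := by linarith
        _ ≤ 2*(n*T)^2 := by linarith
        _ = 2*T^2/n * n^3 := by field_simp
    have hnum : |∑ k ∈ range m', (2*β*k*S k ω + (S k ω)^2)|
        ≤ ∑ k ∈ range (m n), (β*(k:ℝ)^2/Real.sqrt n + c n * (S k ω)^2) := by
      refine (Finset.abs_sum_le_sum_abs _ _).trans ?_
      refine le_trans (Finset.sum_le_sum (fun k _ => ?_))
        (Finset.sum_le_sum_of_subset_of_nonneg (Finset.range_subset_range.2 hm'le)
          (fun k _ _ => by
            have h1 : 0 ≤ β*(k:ℝ)^2/Real.sqrt n := by positivity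
            have h2 : 0 ≤ c n * (S k ω)^2 := mul_nonneg (hc0 n) (sq_nonneg _)
            exact add_nonneg h1 h2))
      have habs : |2*β*(k:ℝ)*S k ω + (S k ω)^2| ≤ 2*β*(k:ℝ)*|S k ω| + (S k ω)^2 := by
        refine (abs_add_le _ _).trans ?_
        have : |2*β*(k:ℝ)*S k ω| = 2*β*(k:ℝ)*|S k ω| := by
          rw [abs_mul, abs_of_nonneg (by positivity : (0:ℝ) ≤ 2*β*(k:ℝ))]
        rw [this, abs_of_nonneg (sq_nonneg (S k ω))]
      have hamgm : 2*(k:ℝ)*|S k ω| ≤ (k:ℝ)^2/Real.sqrt n + Real.sqrt n * (S k ω)^2 := by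
        have := aux_amgm (k:ℝ) |S k ω| (Real.sqrt n) hsn
        rwa [sq_abs] at this
      have hmul : 2*β*(k:ℝ)*|S k ω| ≤ β*((k:ℝ)^2/Real.sqrt n + Real.sqrt n * (S k ω)^2) := by
        calc 2*β*(k:ℝ)*|S k ω| = β*(2*(k:ℝ)*|S k ω|) := by ring
          _ ≤ β*((k:ℝ)^2/Real.sqrt n + Real.sqrt n * (S k ω)^2) :=
            mul_le_mul_of_nonneg_left hamgm hβ
      calc |2*β*(k:ℝ)*S k ω + (S k ω)^2| ≤ 2*β*(k:ℝ)*|S k ω| + (S k ω)^2 := habs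
        _ ≤ β*((k:ℝ)^2/Real.sqrt n + Real.sqrt n * (S k ω)^2) + (S k ω)^2 :=
            add_le_add_left hmul _
        _ = β*(k:ℝ)^2/Real.sqrt n + c n * (S k ω)^2 := by
            simp only [hcdef]; ring
    calc |β^2 * ((∑ k ∈ range m', (k:ℝ)^2)/n^3 - t'^3/3)
          + (∑ k ∈ range m', (2*β*k*S k ω + (S k ω)^2))/n^3|
        ≤ β^2 * |(∑ k ∈ range m', (k:ℝ)^2)/n^3 - t'^3/3|
          + |∑ k ∈ range m', (2*β*k*S k ω + (S k ω)^2)|/n^3 := by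
          refine (abs_add_le _ _).trans ?_
          rw [abs_mul, abs_of_nonneg (sq_nonneg β), abs_div,
            abs_of_pos (by positivity : (0:ℝ) < n^3)]
      _ ≤ β^2 * (2*T^2/n)
          + (∑ k ∈ range (m n), (β*(k:ℝ)^2/Real.sqrt n + c n * (S k ω)^2))/n^3 := by
          gcongr
      _ = W n ω := by simp only [hWdef]; ring
  · -- integral tends to 0
    have hWeq : ∀ n : ℝ, ∫ ω, W n ω ∂μ = 2*β^2*T^2/n +
        (∑ k ∈ range (m n), (β*(k:ℝ)^2/Real.sqrt n + c n * ∫ ω, (S k ω)^2 ∂μ))/n^3 := by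
      intro n
      rw [hWdef]
      rw [integral_add (integrable_const _)
        ((integrable_finset_sum _ (hterm_int n)).div_const _), integral_const]
      simp only [measure_univ, ENNReal.toReal_one, smul_eq_mul, probReal_univ, one_mul]
      congr 1
      rw [integral_div, integral_finset_sum _ (hterm_int n)]
      congr 1
      refine Finset.sum_congr rfl fun k _ => ?_
      rw [integral_add (integrable_const _) ((hSsqInt k).const_mul _), integral_const,
        integral_const_mul]
      simp [measure_univ]
    set b : ℝ → ℝ := fun n => 2*β^2*T^2/n +
      ((n*T) * (β*(n*T)^2/Real.sqrt n + c n * ((n*T) * V₀)))/n^3 with hbdef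
    have hb : Tendsto b atTop (𝓝 0) := by
      have h1 : Tendsto (fun n : ℝ => n⁻¹) atTop (𝓝 0) := tendsto_inv_atTop_zero
      have h2 : Tendsto (fun n : ℝ => (Real.sqrt n)⁻¹) atTop (𝓝 0) := by
        have := aux_sqrt_tendsto.inv_tendsto_atTop
        exact this
      have hlim : Tendsto (fun n : ℝ =>
          (2*β^2*T^2 + T^2*V₀)*n⁻¹ + (β*T^3 + β*T^2*V₀)*(Real.sqrt n)⁻¹)
          atTop (𝓝 0) := by
        have := (h1.const_mul (2*β^2*T^2 + T^2*V₀)).add (h2.const_mul (β*T^3 + β*T^2*V₀))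
        simpa using this
      refine Tendsto.congr' ?_ hlim
      filter_upwards [eventually_ge_atTop (1:ℝ)] with n hn
      have hn0 : (0:ℝ) < n := lt_of_lt_of_le zero_lt_one hn
      have hsn : 0 < Real.sqrt n := Real.sqrt_pos.2 hn0
      set s : ℝ := Real.sqrt n with hs
      have hss : n = s*s := (Real.mul_self_sqrt hn0.le).symm
      rw [hbdef, hcdef]
      simp only
      rw [hss]
      rw [Real.sqrt_mul_self hsn.le]
      field_simp
      ring
    refine tendsto_of_tendsto_of_tendsto_of_le_of_le' tendsto_const_nhds hb ?_ ?_
    · filter_upwards [eventually_ge_atTop (1:ℝ)] with n hn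
      have hn0 : (0:ℝ) < n := lt_of_lt_of_le zero_lt_one hn
      refine integral_nonneg fun ω => ?_
      simp only [hWdef, Pi.zero_apply]
      have h1 : 0 ≤ 2*β^2*T^2/n := by positivity
      have h2 : 0 ≤ (∑ k ∈ range (m n), (β*(k:ℝ)^2/Real.sqrt n + c n * (S k ω)^2))/n^3 := by
        refine div_nonneg (Finset.sum_nonneg fun k _ => ?_) (by positivity)
        have h3 : 0 ≤ β*(k:ℝ)^2/Real.sqrt n := by positivity
        have h4 : 0 ≤ c n * (S k ω)^2 := mul_nonneg (hc0 n) (sq_nonneg _)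
        exact add_nonneg h3 h4
      exact add_nonneg h1 h2
    · filter_upwards [eventually_ge_atTop (1:ℝ)] with n hn
      have hn0 : (0:ℝ) < n := lt_of_lt_of_le zero_lt_one hn
      have hsn : 0 < Real.sqrt n := Real.sqrt_pos.2 hn0
      have hnT0 : (0:ℝ) ≤ n*T := mul_nonneg hn0.le hT.le
      have hmle : ((m n : ℕ) : ℝ) ≤ n*T := Nat.floor_le hnT0
      have hB0 : 0 ≤ β*(n*T)^2/Real.sqrt n + c n * ((n*T) * V₀) := by
        have h1 : 0 ≤ β*(n*T)^2/Real.sqrt n := by positivity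
        have h2 : 0 ≤ c n * ((n*T) * V₀) := mul_nonneg (hc0 n) (mul_nonneg hnT0 hV0)
        exact add_nonneg h1 h2
      rw [hWeq n, hbdef]
      simp only
      gcongr 2*β^2*T^2/n + ?_/n^3
      have hterm : ∀ k ∈ range (m n), β*(k:ℝ)^2/Real.sqrt n + c n * ∫ ω, (S k ω)^2 ∂μ
          ≤ β*(n*T)^2/Real.sqrt n + c n * ((n*T) * V₀) := by
        intro k hk
        have hkm : (k:ℝ) < (m n : ℝ) := by exact_mod_cast Finset.mem_range.1 hk
        have hknT : (k:ℝ) ≤ n*T := le_trans hkm.le hmle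
        have hk0 : (0:ℝ) ≤ k := Nat.cast_nonneg k
        have hk2 : (k:ℝ)^2 ≤ (n*T)^2 := by nlinarith [hknT, hk0]
        have e1 : β*(k:ℝ)^2/Real.sqrt n ≤ β*(n*T)^2/Real.sqrt n := by
          rw [div_eq_mul_inv, div_eq_mul_inv]
          exact mul_le_mul_of_nonneg_right (mul_le_mul_of_nonneg_left hk2 hβ)
            (inv_nonneg.2 hsn.le)
        have e2 : c n * ∫ ω, (S k ω)^2 ∂μ ≤ c n * ((n*T) * V₀) := by
          refine mul_le_mul_of_nonneg_left ?_ (hc0 n)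
          refine le_trans (hS2 k) ?_
          exact mul_le_mul_of_nonneg_right hknT hV0
        exact add_le_add e1 e2
      calc ∑ k ∈ range (m n), (β*(k:ℝ)^2/Real.sqrt n + c n * ∫ ω, (S k ω)^2 ∂μ)
          ≤ ∑ _k ∈ range (m n), (β*(n*T)^2/Real.sqrt n + c n * ((n*T) * V₀)) :=
            Finset.sum_le_sum hterm
        _ = (m n : ℝ) * (β*(n*T)^2/Real.sqrt n + c n * ((n*T) * V₀)) := by
            rw [Finset.sum_const, Finset.card_range, nsmul_eq_mul]
        _ ≤ (n*T) * (β*(n*T)^2/Real.sqrt n + c n * ((n*T) * V₀)) :=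
            mul_le_mul_of_nonneg_right hmle hB0
end
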